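/- Let k be a field and T = k[[t]]. Let θ₁, …, θ_d be elements of T and consider f = (y − θ₁)⋯(y − θ_d) as an element of T[y]. Let ℓ ≥ 1. If f lies in the ideal (y, t^ℓ)^d of T[y], then ord_t(θ_i) ≥ ℓ for all 1 ≤ i ≤ d. -/

import Mathlib

open Polynomial in
lemma aux_coeff_dvd {R : Type*} [CommRing R] (a : R) :
    ∀ (n : ℕ) (f : Polynomial R),
      f ∈ (Ideal.span {(Polynomial.X : Polynomial R), Polynomial.C a}) ^ n →
      ∀ j, a ^ (n - j) ∣ f.coeff j := by
  intro n
  induction n with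
  | zero => intro f _ j; simp
  | succ n ih =>
    intro f hf
    rw [pow_succ] at hf
    refine Submodule.mul_induction_on hf ?_ ?_
    · intro p hp q hq j
      rw [Ideal.mem_span_pair] at hq
      obtain ⟨u, v, rfl⟩ := hq
      have h1 : p * (u * X + v * C a) = (p * u) * X + (p * v) * C a := by ring
      rw [h1, Polynomial.coeff_add, Polynomial.coeff_mul_C]
      have hpu := ih (p * u) (Ideal.mul_mem_right u _ hp)
      have hpv := ih (p * v) (Ideal.mul_mem_right v _ hp)
      rcases j with _ | j
      · rw [Polynomial.coeff_mul_X_zero, zero_add, Nat.sub_zero, pow_succ]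
        exact mul_dvd_mul (by simpa using hpv 0) dvd_rfl
      · rw [Polynomial.coeff_mul_X, Nat.succ_sub_succ]
        refine dvd_add (hpu j) ?_
        have h5 : a ^ (n - (j + 1) + 1) ∣ (p * v).coeff (j + 1) * a := by
          rw [pow_succ]; exact mul_dvd_mul (hpv (j + 1)) dvd_rfl
        exact dvd_trans (pow_dvd_pow a (show n - j ≤ n - (j + 1) + 1 by omega)) h5
    · intro x y hx hy j
      rw [Polynomial.coeff_add]
      exact dvd_add (hx j) (hy j)

/-- Let `k` be a field, `T = k[[t]]`, and `θ₁, …, θ_d ∈ T`.  Consider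
`f = (y − θ₁)⋯(y − θ_d)` in `T[y]`.  Let `ℓ ≥ 1`.  If `f` lies in the ideal `(y, t^ℓ)^d`
of `T[y]`, then `ord_t(θᵢ) ≥ ℓ` (equivalently `t^ℓ ∣ θᵢ`) for all `i`. -/
theorem stmt_1 (k : Type*) [Field k] (d : ℕ) (θ : Fin d → PowerSeries k)
    (ℓ : ℕ) (hℓ : 1 ≤ ℓ)
    (hf : (∏ i, (Polynomial.X - Polynomial.C (θ i))) ∈
      (Ideal.span {(Polynomial.X : Polynomial (PowerSeries k)),
        Polynomial.C ((PowerSeries.X : PowerSeries k) ^ ℓ)}) ^ d) :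
    ∀ i, (PowerSeries.X : PowerSeries k) ^ ℓ ∣ θ i := by
  classical
  by_contra hcon
  push_neg at hcon
  obtain ⟨i0, hi0⟩ := hcon
  rw [PowerSeries.X_pow_dvd_iff] at hi0
  push_neg at hi0
  obtain ⟨n0, hn0ℓ, hn0⟩ := hi0
  have hP : ∃ n, ∃ i, (PowerSeries.coeff n) (θ i) ≠ 0 := ⟨n0, i0, hn0⟩
  set m := Nat.find hP with hm
  obtain ⟨iS, hiS⟩ := Nat.find_spec hP
  have hmℓ : m < ℓ := lt_of_le_of_lt (Nat.find_le ⟨i0, hn0⟩) hn0ℓ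
  have hmin : ∀ i, ∀ n < m, (PowerSeries.coeff n) (θ i) = 0 := by
    intro i n hn
    by_contra hc
    exact absurd (Nat.find_le ⟨i, hc⟩) (not_le.mpr hn)
  have hdvd : ∀ i, (PowerSeries.X : PowerSeries k) ^ m ∣ θ i := fun i =>
    (PowerSeries.X_pow_dvd_iff).mpr (fun n hn => hmin i n hn)
  set S : Finset (Fin d) :=
    Finset.univ.filter (fun i => (PowerSeries.coeff m) (θ i) ≠ 0) with hSdef
  have hiS' : iS ∈ S := by simp [hSdef, hm, hiS]
  set s := S.card with hscard
  have hs1 : 1 ≤ s := Finset.card_pos.mpr ⟨iS, hiS'⟩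
  have hsd : s ≤ d := le_trans (Finset.card_le_card (Finset.filter_subset _ _)) (by simp)
  -- divisibility of the coefficient
  have hco := aux_coeff_dvd ((PowerSeries.X : PowerSeries k) ^ ℓ) d _ hf (d - s)
  rw [Nat.sub_sub_self hsd, ← pow_mul] at hco
  -- Vieta
  have hvieta : (∏ i, (Polynomial.X - Polynomial.C (θ i))).coeff (d - s) =
      (-1) ^ s * ∑ t ∈ Finset.powersetCard s (Finset.univ : Finset (Fin d)),
        ∏ i ∈ t, θ i := by
    have h1 : (∏ i, (Polynomial.X - Polynomial.C (θ i))) =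
        ((Finset.univ.val.map θ).map fun t => Polynomial.X - Polynomial.C t).prod := by
      rw [Multiset.map_map]
      rfl
    have hcard : Multiset.card (Finset.univ.val.map θ) = d := by simp
    rw [h1, Multiset.prod_X_sub_C_coeff _ (by rw [hcard]; omega), hcard,
      Nat.sub_sub_self hsd, Finset.esymm_map_val]
  -- coefficient at m * s vanishes
  have hvan : (PowerSeries.coeff (m * s))
      ((∏ i, (Polynomial.X - Polynomial.C (θ i))).coeff (d - s)) = 0 := by
    exact (PowerSeries.X_pow_dvd_iff.mp hco) (m * s)
      (by have := Nat.mul_lt_mul_of_lt_of_le hmℓ (le_refl s) hs1; nlinarith)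
  rw [hvieta] at hvan
  -- remove the sign
  have hsum : (PowerSeries.coeff (m * s))
      (∑ t ∈ Finset.powersetCard s (Finset.univ : Finset (Fin d)), ∏ i ∈ t, θ i) = 0 := by
    rcases Nat.even_or_odd s with he | ho
    · rwa [he.neg_one_pow, one_mul] at hvan
    · rw [ho.neg_one_pow, neg_one_mul, map_neg, neg_eq_zero] at hvan
      exact hvan
  rw [map_sum] at hsum
  -- the sum reduces to the single term for S
  have hSmem : S ∈ Finset.powersetCard s (Finset.univ : Finset (Fin d)) :=
    Finset.mem_powersetCard.mpr ⟨Finset.subset_univ S, rfl⟩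
  have hother : ∀ t ∈ Finset.powersetCard s (Finset.univ : Finset (Fin d)), t ≠ S →
      (PowerSeries.coeff (m * s)) (∏ i ∈ t, θ i) = 0 := by
    intro t ht htne
    obtain ⟨-, htc⟩ := Finset.mem_powersetCard.mp ht
    have hnots : ¬ t ⊆ S := by
      intro hsub
      exact htne (Finset.eq_of_subset_of_card_le hsub (by omega))
    obtain ⟨j, hjt, hjS⟩ := Finset.not_subset.mp hnots
    have hj0 : (PowerSeries.coeff m) (θ j) = 0 := by
      by_contra hc
      exact hjS (by simp [hSdef, hc])
    have hjdvd : (PowerSeries.X : PowerSeries k) ^ (m + 1) ∣ θ j := by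
      rw [PowerSeries.X_pow_dvd_iff]
      intro n hn
      rcases Nat.lt_or_ge n m with h | h
      · exact hmin j n h
      · have : n = m := by omega
        rw [this]; exact hj0
    have hprod : (PowerSeries.X : PowerSeries k) ^ (m * s + 1) ∣ ∏ i ∈ t, θ i := by
      rw [← Finset.mul_prod_erase t θ hjt]
      have h2 : (∏ _i ∈ t.erase j, (PowerSeries.X : PowerSeries k) ^ m) ∣
          ∏ i ∈ t.erase j, θ i :=
        Finset.prod_dvd_prod_of_dvd _ _ (fun i _ => hdvd i)
      rw [Finset.prod_const, Finset.card_erase_of_mem hjt, htc, ← pow_mul] at h2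
      have h3 := mul_dvd_mul hjdvd h2
      rw [← pow_add] at h3
      have harith : m + 1 + m * (s - 1) = m * s + 1 := by
        obtain ⟨s', hs'⟩ := Nat.exists_eq_succ_of_ne_zero (show s ≠ 0 by omega)
        rw [hs', Nat.succ_sub_one, Nat.mul_succ]
        ring
      rwa [harith] at h3
    exact PowerSeries.X_pow_dvd_iff.mp hprod (m * s) (by omega)
  rw [Finset.sum_eq_single_of_mem S hSmem hother] at hsum
  -- but the S term is nonzero
  have hpsi : ∀ i, ∃ ψ : PowerSeries k, θ i = (PowerSeries.X : PowerSeries k) ^ m * ψ ∧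
      PowerSeries.constantCoeff ψ = (PowerSeries.coeff m) (θ i) := by
    intro i
    obtain ⟨ψ, hψ⟩ := hdvd i
    refine ⟨ψ, hψ, ?_⟩
    rw [hψ, ← PowerSeries.coeff_zero_eq_constantCoeff_apply]
    have := PowerSeries.coeff_X_pow_mul ψ m 0
    rw [zero_add] at this
    rw [this]
  choose ψ hψ hψc using hpsi
  have hSprod : (∏ i ∈ S, θ i) =
      (PowerSeries.X : PowerSeries k) ^ (m * s) * ∏ i ∈ S, ψ i := by
    calc (∏ i ∈ S, θ i) = ∏ i ∈ S, ((PowerSeries.X : PowerSeries k) ^ m * ψ i) :=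
          Finset.prod_congr rfl (fun i _ => hψ i)
      _ = (∏ _i ∈ S, (PowerSeries.X : PowerSeries k) ^ m) * ∏ i ∈ S, ψ i :=
          Finset.prod_mul_distrib
      _ = (PowerSeries.X : PowerSeries k) ^ (m * s) * ∏ i ∈ S, ψ i := by
          rw [Finset.prod_const, ← pow_mul]
  have hne : (PowerSeries.coeff (m * s)) (∏ i ∈ S, θ i) ≠ 0 := by
    rw [hSprod]
    have := PowerSeries.coeff_X_pow_mul (∏ i ∈ S, ψ i) (m * s) 0
    rw [zero_add] at this
    rw [this, PowerSeries.coeff_zero_eq_constantCoeff_apply, map_prod]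
    rw [Finset.prod_ne_zero_iff]
    intro i hi
    rw [hψc i]
    simpa [hSdef] using hi
  exact hne hsum
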